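/- Let d ≥ 1. For y ∈ ℝ^d and a symmetric positive definite d×d matrix Q let G_{y,Q}(x) = (2π)^{−d/2} (det Q)^{−1/2} exp(−(1/2)(x − y)ᵀ Q^{−1} (x − y)), and write G_Q = G_{0,Q}. Let Q₁, Q₂, Q₃ be symmetric positive definite d×d matrices and y₁, y₂ ∈ ℝ^d, and set Q₁₂ = (Q₁^{−1} + Q₂^{−1})^{−1} and y₁₂ = Q₁₂ (Q₁^{−1} y₁ + Q₂^{−1} y₂). Then for every x ∈ ℝ^d: ∫_{ℝ^d} G_{y₁,Q₁}(y) G_{y₂,Q₂}(y) G_{Q₃}(x − y)² dy = (4π)^{−d/2} (det Q₃)^{−1/2} G_{Q₁+Q₂}(y₁ − y₂) G_{y₁₂, Q₁₂ + Q₃/2}(x). -/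

import Mathlib

open MeasureTheory Matrix Real

lemma integral_exp_neg_half_dot (d : ℕ) :
    ∫ z : Fin d → ℝ, Real.exp (-(1/2) * (z ⬝ᵥ z)) = (2 * π) ^ ((d:ℝ) / 2) := by
  have h := EuclideanSpace.volume_preserving_symm_measurableEquiv_toLp (Fin d)
  rw [← h.integral_comp (MeasurableEquiv.measurableEmbedding _)]
  have : ∀ v : EuclideanSpace ℝ (Fin d),
      Real.exp (-(1/2) * ((MeasurableEquiv.toLp 2 (Fin d → ℝ)).symm v ⬝ᵥ
        (MeasurableEquiv.toLp 2 (Fin d → ℝ)).symm v)) = Real.exp (-(1/2) * ‖v‖^2) := by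
    intro v
    congr 1
    congr 1
    rw [EuclideanSpace.norm_eq]
    rw [Real.sq_sqrt (by positivity)]
    simp [dotProduct, sq]
  simp_rw [this]
  rw [GaussianFourier.integral_rexp_neg_mul_sq_norm (by norm_num : (0:ℝ) < 1/2)]
  simp [div_div_eq_mul_div, div_eq_mul_inv]
  norm_num [mul_comm]

lemma integral_exp_neg_half_quad (d : ℕ) (P : Matrix (Fin d) (Fin d) ℝ)
    (hP : P.PosDef) (m : Fin d → ℝ) :
    ∫ y : Fin d → ℝ, Real.exp (-(1/2) * ((y - m) ⬝ᵥ P.mulVec (y - m)))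
      = (2 * π) ^ ((d:ℝ) / 2) * P.det ^ (-(1:ℝ)/2) := by
  have htrans : ∫ y : Fin d → ℝ, Real.exp (-(1/2) * ((y - m) ⬝ᵥ P.mulVec (y - m)))
      = ∫ y : Fin d → ℝ, Real.exp (-(1/2) * (y ⬝ᵥ P.mulVec y)) := by
    rw [← integral_add_right_eq_self (fun y : Fin d → ℝ =>
      Real.exp (-(1/2) * ((y - m) ⬝ᵥ P.mulVec (y - m)))) m]
    simp only [add_sub_cancel_right]
  rw [htrans]
  set S := (open scoped MatrixOrder in CFC.sqrt P) with hSdef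
  have hSS : S * S = P := open scoped MatrixOrder in CFC.sqrt_mul_sqrt_self P hP.posSemidef.nonneg
  have hSsym : Sᵀ = S := by
    have h := (open scoped MatrixOrder in (CFC.sqrt_nonneg P).posSemidef).1
    rwa [Matrix.IsHermitian, Matrix.conjTranspose_eq_transpose_of_trivial] at h
  have hdetP : 0 < P.det := hP.det_pos
  have hdetS : S.det * S.det = P.det := by rw [← Matrix.det_mul, hSS]
  have hSd0 : S.det ≠ 0 := by
    intro h; rw [h, mul_zero] at hdetS; exact hdetP.ne' hdetS.symm
  have hSid0 : (S⁻¹).det ≠ 0 := by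
    simp [Matrix.det_nonsing_inv, Ring.inverse_eq_inv', hSd0]
  have hmap := Real.map_matrix_volume_pi_eq_smul_volume_pi hSid0
  have hfun : ∀ z : Fin d → ℝ,
      Real.exp (-(1/2) * ((Matrix.toLin' S⁻¹ z) ⬝ᵥ P.mulVec (Matrix.toLin' S⁻¹ z)))
        = Real.exp (-(1/2) * (z ⬝ᵥ z)) := by
    intro z
    congr 1
    have h1 : P.mulVec (S⁻¹.mulVec z) = S.mulVec z := by
      rw [Matrix.mulVec_mulVec, ← hSS, Matrix.mul_assoc,
        Matrix.mul_nonsing_inv S (isUnit_iff_ne_zero.mpr hSd0), Matrix.mul_one]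
    simp only [Matrix.toLin'_apply, h1]
    rw [Matrix.dotProduct_mulVec, ← Matrix.mulVec_transpose, hSsym,
      Matrix.mulVec_mulVec, Matrix.mul_nonsing_inv S (isUnit_iff_ne_zero.mpr hSd0), Matrix.one_mulVec]
  have hφ : Continuous (Matrix.toLin' (S⁻¹ : Matrix (Fin d) (Fin d) ℝ)) :=
    LinearMap.continuous_of_finiteDimensional _
  have hfc : Continuous fun y : Fin d → ℝ => Real.exp (-(1/2) * (y ⬝ᵥ P.mulVec y)) := by
    apply Real.continuous_exp.comp
    exact Continuous.mul continuous_const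
      (continuous_id.dotProduct (continuous_const.matrix_mulVec continuous_id))
  have habs : |(S⁻¹).det⁻¹| = |S.det| := by
    rw [Matrix.det_nonsing_inv, Ring.inverse_eq_inv']
    simp
  have key : (2*π) ^ ((d:ℝ)/2)
      = |S.det| * ∫ y : Fin d → ℝ, Real.exp (-(1/2) * (y ⬝ᵥ P.mulVec y)) := by
    rw [← integral_exp_neg_half_dot d]
    calc ∫ z : Fin d → ℝ, Real.exp (-(1/2) * (z ⬝ᵥ z))
        = ∫ z : Fin d → ℝ, Real.exp (-(1/2) * ((Matrix.toLin' S⁻¹ z) ⬝ᵥ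
            P.mulVec (Matrix.toLin' S⁻¹ z))) := by simp_rw [hfun]
      _ = ∫ y : Fin d → ℝ, Real.exp (-(1/2) * (y ⬝ᵥ P.mulVec y))
            ∂(Measure.map (Matrix.toLin' S⁻¹) volume) :=
          (integral_map hφ.measurable.aemeasurable hfc.aestronglyMeasurable).symm
      _ = |S.det| * ∫ y : Fin d → ℝ, Real.exp (-(1/2) * (y ⬝ᵥ P.mulVec y)) := by
          rw [hmap, integral_smul_measure, habs, ENNReal.toReal_ofReal (abs_nonneg _),
            smul_eq_mul]
  have hcoef : |S.det| = P.det ^ ((1:ℝ)/2) := by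
    rw [← Real.sqrt_eq_rpow, ← hdetS, ← sq, Real.sqrt_sq_eq_abs]
  have habs0 : |S.det| ≠ 0 := by simpa using hSd0
  have : ∫ y : Fin d → ℝ, Real.exp (-(1/2) * (y ⬝ᵥ P.mulVec y))
      = (2*π) ^ ((d:ℝ)/2) * |S.det|⁻¹ := by
    rw [key, mul_comm |S.det|, mul_assoc, mul_inv_cancel₀ habs0, mul_one]
  rw [this, hcoef]
  rw [show (-(1:ℝ)/2) = -((1:ℝ)/2) by norm_num, Real.rpow_neg hdetP.le]

variable {d : ℕ}

lemma symm_of_posDef {M : Matrix (Fin d) (Fin d) ℝ} (hM : M.PosDef) : Mᵀ = M := by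
  have h := hM.isHermitian
  rwa [Matrix.IsHermitian, Matrix.conjTranspose_eq_transpose_of_trivial] at h

lemma dot_symm (M : Matrix (Fin d) (Fin d) ℝ) (hM : Mᵀ = M) (u v : Fin d → ℝ) :
    u ⬝ᵥ M.mulVec v = v ⬝ᵥ M.mulVec u := by
  rw [Matrix.dotProduct_mulVec, ← Matrix.mulVec_transpose, hM, dotProduct_comm]

lemma mulVec_dot_left (A : Matrix (Fin d) (Fin d) ℝ) (u w : Fin d → ℝ) :
    (A.mulVec u) ⬝ᵥ w = u ⬝ᵥ (Aᵀ.mulVec w) := by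
  rw [dotProduct_comm, Matrix.dotProduct_mulVec, ← Matrix.mulVec_transpose, dotProduct_comm]

lemma quad_expand (M : Matrix (Fin d) (Fin d) ℝ) (hM : Mᵀ = M) (u v : Fin d → ℝ) :
    (u - v) ⬝ᵥ M.mulVec (u - v)
      = u ⬝ᵥ M.mulVec u - 2 * (u ⬝ᵥ M.mulVec v) + v ⬝ᵥ M.mulVec v := by
  simp only [Matrix.mulVec_sub, sub_dotProduct, dotProduct_sub]
  rw [dot_symm M hM v u]
  ring

lemma inv_add_inv_inv_eq₁ {A B : Matrix (Fin d) (Fin d) ℝ} (hA : A.PosDef) (hB : B.PosDef) :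
    (A⁻¹ + B⁻¹)⁻¹ = A * (A + B)⁻¹ * B := by
  have hAd : IsUnit A.det := isUnit_iff_ne_zero.mpr hA.det_pos.ne'
  have hBd : IsUnit B.det := isUnit_iff_ne_zero.mpr hB.det_pos.ne'
  have h1 : A⁻¹ + B⁻¹ = B⁻¹ * (A + B) * A⁻¹ := by
    have e1 : (A + B) * A⁻¹ = 1 + B * A⁻¹ := by
      rw [Matrix.add_mul, Matrix.mul_nonsing_inv _ hAd]
    rw [mul_assoc, e1, Matrix.mul_add, mul_one, ← mul_assoc,
      Matrix.nonsing_inv_mul _ hBd, one_mul, add_comm]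
  rw [h1, Matrix.mul_inv_rev, Matrix.mul_inv_rev, Matrix.nonsing_inv_nonsing_inv _ hAd,
    Matrix.nonsing_inv_nonsing_inv _ hBd, Matrix.mul_assoc]

lemma inv_add_inv_inv_eq₂ {A B : Matrix (Fin d) (Fin d) ℝ} (hA : A.PosDef) (hB : B.PosDef) :
    (A⁻¹ + B⁻¹)⁻¹ = B * (A + B)⁻¹ * A := by
  have := inv_add_inv_inv_eq₁ hB hA
  rw [add_comm B⁻¹ A⁻¹, add_comm B A] at this
  exact this

lemma quad_split {A B : Matrix (Fin d) (Fin d) ℝ} (hA : A.PosDef) (hB : B.PosDef)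
    (a b y : Fin d → ℝ) :
    (y - a) ⬝ᵥ A.mulVec (y - a) + (y - b) ⬝ᵥ B.mulVec (y - b)
      = (y - (A + B)⁻¹.mulVec (A.mulVec a + B.mulVec b)) ⬝ᵥ
          (A + B).mulVec (y - (A + B)⁻¹.mulVec (A.mulVec a + B.mulVec b))
        + (a - b) ⬝ᵥ (A⁻¹ + B⁻¹)⁻¹.mulVec (a - b) := by
  have hAd : IsUnit A.det := isUnit_iff_ne_zero.mpr hA.det_pos.ne'
  have hBd : IsUnit B.det := isUnit_iff_ne_zero.mpr hB.det_pos.ne'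
  have hM : (A + B).PosDef := hA.add hB
  have hMd : IsUnit (A + B).det := isUnit_iff_ne_zero.mpr hM.det_pos.ne'
  have hAs : Aᵀ = A := symm_of_posDef hA
  have hBs : Bᵀ = B := symm_of_posDef hB
  have hMs : (A + B)ᵀ = A + B := symm_of_posDef hM
  have hMis : ((A + B)⁻¹)ᵀ = (A + B)⁻¹ := by
    rw [Matrix.transpose_nonsing_inv, hMs]
  have hW : ((A⁻¹ + B⁻¹)⁻¹).PosDef := (hA.inv.add hB.inv).inv
  have hWs : ((A⁻¹ + B⁻¹)⁻¹)ᵀ = (A⁻¹ + B⁻¹)⁻¹ := symm_of_posDef hW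
  have hWAB : (A⁻¹ + B⁻¹)⁻¹ = A * (A + B)⁻¹ * B := inv_add_inv_inv_eq₁ hA hB
  have hWBA : (A⁻¹ + B⁻¹)⁻¹ = B * (A + B)⁻¹ * A := inv_add_inv_inv_eq₂ hA hB
  have hAMA : A * (A + B)⁻¹ * A = A - (A⁻¹ + B⁻¹)⁻¹ := by
    have h2 : A * (A + B)⁻¹ * (A + B) = A := by
      rw [mul_assoc, Matrix.nonsing_inv_mul _ hMd, mul_one]
    have h3 := Matrix.mul_add (A * (A + B)⁻¹) A B
    rw [h2] at h3
    rw [hWAB, eq_sub_iff_add_eq]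
    exact h3.symm
  have hBMB : B * (A + B)⁻¹ * B = B - (A⁻¹ + B⁻¹)⁻¹ := by
    have h2 : B * (A + B)⁻¹ * (A + B) = B := by
      rw [mul_assoc, Matrix.nonsing_inv_mul _ hMd, mul_one]
    have h3 := Matrix.mul_add (B * (A + B)⁻¹) A B
    rw [h2] at h3
    rw [hWBA, eq_sub_iff_add_eq, add_comm]
    exact h3.symm
  have hMc : (A + B).mulVec ((A + B)⁻¹.mulVec (A.mulVec a + B.mulVec b))
      = A.mulVec a + B.mulVec b := by
    rw [Matrix.mulVec_mulVec, Matrix.mul_nonsing_inv _ hMd, Matrix.one_mulVec]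
  have key : a ⬝ᵥ A.mulVec a + b ⬝ᵥ B.mulVec b
      - (A.mulVec a + B.mulVec b) ⬝ᵥ (A + B)⁻¹.mulVec (A.mulVec a + B.mulVec b)
      = (a - b) ⬝ᵥ (A⁻¹ + B⁻¹)⁻¹.mulVec (a - b) := by
    rw [quad_expand _ hWs]
    simp only [Matrix.mulVec_add, dotProduct_add, add_dotProduct]
    simp only [mulVec_dot_left, hAs, hBs, Matrix.mulVec_mulVec]
    rw [← Matrix.mul_assoc A, ← Matrix.mul_assoc A, ← Matrix.mul_assoc B, ← Matrix.mul_assoc B]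
    rw [hAMA, hBMB, ← hWAB, ← hWBA]
    simp only [Matrix.sub_mulVec, dotProduct_sub]
    rw [dot_symm _ hWs b a]
    ring
  rw [quad_expand _ hAs, quad_expand _ hBs, quad_expand _ hMs, hMc]
  simp only [Matrix.add_mulVec, dotProduct_add]
  rw [← key]
  have hc : ((A + B)⁻¹.mulVec (A.mulVec a + B.mulVec b)) ⬝ᵥ (A.mulVec a)
        + ((A + B)⁻¹.mulVec (A.mulVec a + B.mulVec b)) ⬝ᵥ (B.mulVec b)
      = (A.mulVec a + B.mulVec b) ⬝ᵥ (A + B)⁻¹.mulVec (A.mulVec a + B.mulVec b) := by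
    rw [← dotProduct_add, dotProduct_comm]
  rw [hc]
  ring

lemma posDef_smul' {d : ℕ} {M : Matrix (Fin d) (Fin d) ℝ} (hM : M.PosDef) {c : ℝ}
    (hc : 0 < c) : (c • M).PosDef := by
  refine Matrix.PosDef.of_dotProduct_mulVec_pos ?_ (fun v hv => ?_)
  · have h := hM.isHermitian
    rw [Matrix.IsHermitian] at h ⊢
    rw [Matrix.conjTranspose_smul, h, star_trivial]
  · have h := hM.dotProduct_mulVec_pos hv
    rw [Matrix.smul_mulVec, dotProduct_smul]
    exact mul_pos hc h

lemma inv_add_inv_eq {d : ℕ} {A B : Matrix (Fin d) (Fin d) ℝ} (hA : A.PosDef) (hB : B.PosDef) :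
    A⁻¹ + B⁻¹ = B⁻¹ * (A + B) * A⁻¹ := by
  have hAd : IsUnit A.det := isUnit_iff_ne_zero.mpr hA.det_pos.ne'
  have hBd : IsUnit B.det := isUnit_iff_ne_zero.mpr hB.det_pos.ne'
  have e1 : (A + B) * A⁻¹ = 1 + B * A⁻¹ := by
    rw [Matrix.add_mul, Matrix.mul_nonsing_inv _ hAd]
  rw [mul_assoc, e1, Matrix.mul_add, mul_one, ← mul_assoc,
    Matrix.nonsing_inv_mul _ hBd, one_mul, add_comm]

lemma dot_flip {d : ℕ} (M : Matrix (Fin d) (Fin d) ℝ) (u v : Fin d → ℝ) :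
    (u - v) ⬝ᵥ M.mulVec (u - v) = (v - u) ⬝ᵥ M.mulVec (v - u) := by
  rw [show u - v = -(v - u) by abel]
  rw [Matrix.mulVec_neg, neg_dotProduct, dotProduct_neg, neg_neg]

/-- The Gaussian density on `ℝ^d` with mean `y` and covariance matrix `Q`:
`G_{y,Q}(x) = (2π)^{−d/2} (det Q)^{−1/2} exp(−(1/2)(x − y)ᵀ Q⁻¹ (x − y))`. -/
noncomputable def gaussianFn (d : ℕ) (y : Fin d → ℝ)
    (Q : Matrix (Fin d) (Fin d) ℝ) (x : Fin d → ℝ) : ℝ :=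
  (2 * π) ^ (-(d : ℝ) / 2) * Q.det ^ (-(1 : ℝ) / 2) *
    Real.exp (-(1 / 2) * ((x - y) ⬝ᵥ Q⁻¹.mulVec (x - y)))

/-- **Convolution of a product of two Gaussians with a squared centered Gaussian
(Appendix A).**  With `Q₁₂ = (Q₁⁻¹ + Q₂⁻¹)⁻¹` and
`y₁₂ = Q₁₂(Q₁⁻¹ y₁ + Q₂⁻¹ y₂)`, one has for every `x`:
`∫ G_{y₁,Q₁}(y) G_{y₂,Q₂}(y) G_{Q₃}(x − y)² dy
  = (4π)^{−d/2} (det Q₃)^{−1/2} G_{Q₁+Q₂}(y₁ − y₂) G_{y₁₂, Q₁₂ + Q₃/2}(x)`. -/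
theorem gaussian_product_square_convolution
    (d : ℕ) (hd : 1 ≤ d)
    (Q₁ Q₂ Q₃ : Matrix (Fin d) (Fin d) ℝ)
    (hQ₁ : Q₁.PosDef) (hQ₂ : Q₂.PosDef) (hQ₃ : Q₃.PosDef)
    (y₁ y₂ : Fin d → ℝ) (x : Fin d → ℝ) :
    (∫ y : Fin d → ℝ,
        gaussianFn d y₁ Q₁ y * gaussianFn d y₂ Q₂ y *
          (gaussianFn d 0 Q₃ (x - y)) ^ 2)
      =
    (4 * π) ^ (-(d : ℝ) / 2) * Q₃.det ^ (-(1 : ℝ) / 2) *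
      gaussianFn d 0 (Q₁ + Q₂) (y₁ - y₂) *
      gaussianFn d
        ((Q₁⁻¹ + Q₂⁻¹)⁻¹.mulVec (Q₁⁻¹.mulVec y₁ + Q₂⁻¹.mulVec y₂))
        ((Q₁⁻¹ + Q₂⁻¹)⁻¹ + (1 / 2 : ℝ) • Q₃) x := by
  have hA : (Q₁⁻¹).PosDef := hQ₁.inv
  have hB : (Q₂⁻¹).PosDef := hQ₂.inv
  have hC : (Q₃⁻¹).PosDef := hQ₃.inv
  have hQ₁d : IsUnit Q₁.det := isUnit_iff_ne_zero.mpr hQ₁.det_pos.ne'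
  have hQ₂d : IsUnit Q₂.det := isUnit_iff_ne_zero.mpr hQ₂.det_pos.ne'
  have hQ₃d : IsUnit Q₃.det := isUnit_iff_ne_zero.mpr hQ₃.det_pos.ne'
  set U : Matrix (Fin d) (Fin d) ℝ := Q₁⁻¹ + Q₂⁻¹ with hUdef
  set D : Matrix (Fin d) (Fin d) ℝ := (2:ℝ) • Q₃⁻¹ with hDdef
  have hU : U.PosDef := hA.add hB
  have hD : D.PosDef := posDef_smul' hC (by norm_num)
  have hUd : IsUnit U.det := isUnit_iff_ne_zero.mpr hU.det_pos.ne'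
  have hDd : IsUnit D.det := isUnit_iff_ne_zero.mpr hD.det_pos.ne'
  set S : Matrix (Fin d) (Fin d) ℝ := U + D with hSdef
  have hS : S.PosDef := hU.add hD
  set c : Fin d → ℝ := U⁻¹.mulVec (Q₁⁻¹.mulVec y₁ + Q₂⁻¹.mulVec y₂) with hcdef
  set m : Fin d → ℝ := S⁻¹.mulVec (U.mulVec c + D.mulVec x) with hmdef
  have hDinv : D⁻¹ = (1/2 : ℝ) • Q₃ := by
    apply Matrix.inv_eq_right_inv
    rw [hDdef, Matrix.smul_mul, Matrix.mul_smul, smul_smul,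
      Matrix.nonsing_inv_mul _ hQ₃d]
    norm_num
  have hT : ((U⁻¹ + (1/2 : ℝ) • Q₃)).PosDef := by
    rw [← hDinv]; exact hU.inv.add hD.inv
  have hQ12 : (Q₁ + Q₂).PosDef := hQ₁.add hQ₂
  -- the exponent identity
  have hquad : ∀ y : Fin d → ℝ,
      (y - y₁) ⬝ᵥ Q₁⁻¹.mulVec (y - y₁) + (y - y₂) ⬝ᵥ Q₂⁻¹.mulVec (y - y₂)
        + (x - y) ⬝ᵥ D.mulVec (x - y)
      = (y - m) ⬝ᵥ S.mulVec (y - m)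
        + (y₁ - y₂) ⬝ᵥ (Q₁ + Q₂)⁻¹.mulVec (y₁ - y₂)
        + (x - c) ⬝ᵥ (U⁻¹ + (1/2 : ℝ) • Q₃)⁻¹.mulVec (x - c) := by
    intro y
    have h1 := quad_split hA hB y₁ y₂ y
    rw [Matrix.nonsing_inv_nonsing_inv _ hQ₁d, Matrix.nonsing_inv_nonsing_inv _ hQ₂d] at h1
    have h2 := quad_split hU hD c x y
    rw [hDinv] at h2
    have h3 := dot_flip D x y
    have h4 := dot_flip (U⁻¹ + (1/2 : ℝ) • Q₃)⁻¹ c x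
    linarith [h1, h2, h3, h4]
  -- pointwise form of the integrand
  have hpt : ∀ y : Fin d → ℝ,
      gaussianFn d y₁ Q₁ y * gaussianFn d y₂ Q₂ y * (gaussianFn d 0 Q₃ (x - y)) ^ 2
      = ((2 * π) ^ (-(d : ℝ) / 2) * Q₁.det ^ (-(1 : ℝ) / 2)
          * ((2 * π) ^ (-(d : ℝ) / 2) * Q₂.det ^ (-(1 : ℝ) / 2))
          * ((2 * π) ^ (-(d : ℝ) / 2) * Q₃.det ^ (-(1 : ℝ) / 2)) ^ 2
          * Real.exp (-(1/2) * ((y₁ - y₂) ⬝ᵥ (Q₁ + Q₂)⁻¹.mulVec (y₁ - y₂)))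
          * Real.exp (-(1/2) * ((x - c) ⬝ᵥ (U⁻¹ + (1/2 : ℝ) • Q₃)⁻¹.mulVec (x - c))))
        * Real.exp (-(1/2) * ((y - m) ⬝ᵥ S.mulVec (y - m))) := by
    intro y
    have hcollect : ∀ r1 r2 r3 c1 c2 c3 : ℝ,
        (c1 * Real.exp r1) * (c2 * Real.exp r2) * (c3 * Real.exp r3) ^ 2
          = (c1 * c2 * c3 ^ 2) * Real.exp (r1 + r2 + 2 * r3) := by
      intros r1 r2 r3 c1 c2 c3
      rw [Real.exp_add, Real.exp_add, two_mul, Real.exp_add]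
      ring
    unfold gaussianFn
    rw [sub_zero]
    rw [hcollect]
    have hDdot : (x - y) ⬝ᵥ D.mulVec (x - y)
        = 2 * ((x - y) ⬝ᵥ Q₃⁻¹.mulVec (x - y)) := by
      rw [hDdef, Matrix.smul_mulVec, dotProduct_smul, smul_eq_mul]
    have hexp : -(1/2 : ℝ) * ((y - y₁) ⬝ᵥ Q₁⁻¹.mulVec (y - y₁))
        + -(1/2) * ((y - y₂) ⬝ᵥ Q₂⁻¹.mulVec (y - y₂))
        + 2 * (-(1/2) * ((x - y) ⬝ᵥ Q₃⁻¹.mulVec (x - y)))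
        = -(1/2) * ((y₁ - y₂) ⬝ᵥ (Q₁ + Q₂)⁻¹.mulVec (y₁ - y₂))
          + -(1/2) * ((x - c) ⬝ᵥ (U⁻¹ + (1/2 : ℝ) • Q₃)⁻¹.mulVec (x - c))
          + -(1/2) * ((y - m) ⬝ᵥ S.mulVec (y - m)) := by
      have := hquad y
      linarith [this, hDdot]
    rw [hexp, Real.exp_add, Real.exp_add]
    ring
  rw [integral_congr_ae (Filter.Eventually.of_forall hpt)]
  rw [MeasureTheory.integral_const_mul]
  rw [integral_exp_neg_half_quad d S hS m]
  -- now a purely scalar identity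
  unfold gaussianFn
  rw [sub_zero]
  -- determinant facts
  have hq1 : (0:ℝ) < Q₁.det := hQ₁.det_pos
  have hq2 : (0:ℝ) < Q₂.det := hQ₂.det_pos
  have hq3 : (0:ℝ) < Q₃.det := hQ₃.det_pos
  have hu : (0:ℝ) < U.det := hU.det_pos
  have hs : (0:ℝ) < S.det := hS.det_pos
  have hq12 : (0:ℝ) < (Q₁ + Q₂).det := hQ12.det_pos
  have ht : (0:ℝ) < (U⁻¹ + (1/2 : ℝ) • Q₃).det := hT.det_pos
  have h2π : (0:ℝ) < 2 * π := by positivity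
  have h4π : (0:ℝ) < 4 * π := by positivity
  -- det identities
  have hQ12eq : (Q₁ + Q₂).det = Q₂.det * U.det * Q₁.det := by
    have h := inv_add_inv_eq hA hB
    rw [Matrix.nonsing_inv_nonsing_inv _ hQ₁d, Matrix.nonsing_inv_nonsing_inv _ hQ₂d] at h
    rw [h, Matrix.det_mul, Matrix.det_mul, hUdef]
  have hTeq : (U⁻¹ + (1/2 : ℝ) • Q₃).det
      = U.det⁻¹ * S.det * ((1/2 : ℝ) ^ d * Q₃.det) := by
    have h := inv_add_inv_eq hD hU
    rw [hDinv, add_comm D U, ← hSdef] at h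
    rw [add_comm (U⁻¹) ((1/2 : ℝ) • Q₃), h, Matrix.det_mul, Matrix.det_mul,
      Matrix.det_nonsing_inv, Ring.inverse_eq_inv', Matrix.det_smul, Fintype.card_fin]
  have hdet : Q₁.det * Q₂.det * Q₃.det * S.det
      = 2 ^ d * (Q₁ + Q₂).det * (U⁻¹ + (1/2 : ℝ) • Q₃).det := by
    have h2d : (1/2 : ℝ) ^ d = ((2:ℝ) ^ d)⁻¹ := by
      rw [one_div, inv_pow]
    have h2p : (2:ℝ) ^ d ≠ 0 := by positivity
    rw [hQ12eq, hTeq, h2d]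
    field_simp
  -- take logarithms
  have hlogdet : Real.log Q₁.det + Real.log Q₂.det + Real.log Q₃.det + Real.log S.det
      = d * Real.log 2 + Real.log (Q₁ + Q₂).det
        + Real.log (U⁻¹ + (1/2 : ℝ) • Q₃).det := by
    have h1 : Real.log (Q₁.det * Q₂.det * Q₃.det * S.det)
        = Real.log Q₁.det + Real.log Q₂.det + Real.log Q₃.det + Real.log S.det := by
      rw [Real.log_mul (by positivity) hs.ne', Real.log_mul (by positivity) hq3.ne',
        Real.log_mul hq1.ne' hq2.ne']
    have h2 : Real.log ((2:ℝ) ^ d * (Q₁ + Q₂).det * (U⁻¹ + (1/2 : ℝ) • Q₃).det)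
        = d * Real.log 2 + Real.log (Q₁ + Q₂).det
          + Real.log (U⁻¹ + (1/2 : ℝ) • Q₃).det := by
      rw [Real.log_mul (by positivity) ht.ne', Real.log_mul (by positivity) hq12.ne',
        Real.log_pow]
    rw [← h1, ← h2, hdet]
  have hlog4π : Real.log (4 * π) = Real.log 2 + Real.log (2 * π) := by
    rw [show (4:ℝ) * π = 2 * (2 * π) by ring, Real.log_mul two_ne_zero h2π.ne']
  -- final computation
  simp only [Real.rpow_def_of_pos h2π, Real.rpow_def_of_pos h4π,
    Real.rpow_def_of_pos hq1, Real.rpow_def_of_pos hq2, Real.rpow_def_of_pos hq3,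
    Real.rpow_def_of_pos hs, Real.rpow_def_of_pos hq12, Real.rpow_def_of_pos ht]
  simp only [← Real.exp_add, sq]
  rw [Real.exp_eq_exp]
  linear_combination (-(1:ℝ)/2) * hlogdet + ((d:ℝ)/2) * hlog4π
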